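/- Let β ∈ (0,1] and α > −1. Suppose θ ∈ C([0,T); H^s(ℝ²)) ∩ L^∞(0,T; L¹(ℝ²)), with s > 1+β, is a solution of the gSQG equation that is locally self-similar in a ball B_ρ(x₀) ⊂ ℝ² with scaling parameter α and profile Θ that is β-Hölder continuous on ℝ². Fix p ≥ 1 and suppose that for some r ≥ p+1 one has Θ ∈ L^r(ℝ²) (i.e. ∫_{|y| ≤ L} |Θ(y)|^r dy ≲ 1 for all large L). If α = β − 1 + 2/r, then Θ ≡ 0 on ℝ². -/

import Mathlib

open MeasureTheory Filter Metric Set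
open scoped Topology FourierTransform RealInnerProductSpace

noncomputable section

/-- The plane `ℝ²`. -/
abbrev R2 : Type := EuclideanSpace ℝ (Fin 2)

/-- The rotation by 90 degrees: `(a, b)^⊥ = (-b, a)`. -/
def perp (v : R2) : R2 := (EuclideanSpace.equiv (Fin 2) ℝ).symm ![-(v 1), v 0]

/-- The kernel `K_β(z) = z^⊥ / |z|^{2+β}` of the gSQG constitutive law. -/
def gsqgKernel (β : ℝ) (z : R2) : R2 := ‖z‖ ^ (-(2 + β)) • perp z

/-- Fourier-side integrand defining the `H^s(ℝ²)` norm: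
`(1 + |ξ|²)^s |f̂(ξ)|²`. -/
def fourierWeight (s : ℝ) (f : R2 → ℝ) (ξ : R2) : ℝ :=
  (1 + ‖ξ‖ ^ 2) ^ s * ‖𝓕 (fun x => (f x : ℂ)) ξ‖ ^ 2

/-- Membership in the Sobolev space `H^s(ℝ²)`. -/
def MemHs (s : ℝ) (f : R2 → ℝ) : Prop :=
  MemLp f 2 volume ∧ Integrable (fourierWeight s f)

/-- `θ ∈ C([0,T); H^s(ℝ²)) ∩ L^∞(0,T; L¹(ℝ²))`. -/
def RegularityClass (s T : ℝ) (θ : R2 → ℝ → ℝ) : Prop :=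
  (∀ t ∈ Ico (0:ℝ) T, MemHs s (fun x => θ x t)) ∧
  (∀ t₀ ∈ Ico (0:ℝ) T,
    Tendsto (fun t => ∫ ξ, fourierWeight s (fun x => θ x t - θ x t₀) ξ)
      (𝓝[Ico (0:ℝ) T] t₀) (𝓝 0)) ∧
  (∃ M : ℝ, ∀ t ∈ Ioo (0:ℝ) T, Integrable (fun x => θ x t) ∧ (∫ x, |θ x t|) ≤ M)

/-- `θ` is a solution of the gSQG equation on `ℝ² × (0,T)`: there is a velocity
field `u`, given (with a constant `C_β` depending only on `β`) by the principal
value integral `u(x,t) = C_β P.V. ∫ K_β(x-y) θ(y,t) dy`, such that the transport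
equation `∂ₜθ + (u·∇)θ = 0` holds. -/
def IsGSQGSolution (β T : ℝ) (θ : R2 → ℝ → ℝ) : Prop :=
  ∃ (u : R2 → ℝ → R2) (Cβ : ℝ),
    (∀ t ∈ Ioo (0:ℝ) T, ∀ x : R2,
      Tendsto (fun ε : ℝ =>
          ∫ y in {y : R2 | ε < dist x y}, (Cβ * θ y t) • gsqgKernel β (x - y))
        (𝓝[>] (0:ℝ)) (𝓝 (u x t))) ∧
    (∀ t ∈ Ioo (0:ℝ) T, ∀ x : R2,
      HasDerivAt (fun τ => θ x τ) (-(⟪u x t, gradient (fun z => θ z t) x⟫)) t)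

/-- `θ` is locally self-similar in the ball `B_ρ(x₀)` with scaling parameter `α`
and profile `Θ`:
`θ(x,t) = (T-t)^{-(1+α-β)/(1+α)} Θ((x-x₀)(T-t)^{-1/(1+α)})` on `B_ρ(x₀) × (0,T)`. -/
def LocallySelfSimilar (β α T ρ : ℝ) (x₀ : R2) (θ : R2 → ℝ → ℝ) (Θ : R2 → ℝ) : Prop :=
  ∀ t ∈ Ioo (0:ℝ) T, ∀ x ∈ ball x₀ ρ,
    θ x t = (T - t) ^ (-((1 + α - β) / (1 + α))) *
      Θ (((T - t) ^ (-(1 / (1 + α)))) • (x - x₀))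

/-- `Θ` is `β`-Hölder continuous on `ℝ²`. -/
def HolderBeta (β : ℝ) (Θ : R2 → ℝ) : Prop :=
  ∃ C : ℝ, 0 ≤ C ∧ ∀ x y : R2, |Θ x - Θ y| ≤ C * ‖x - y‖ ^ β


/-- Auxiliary continuity: a β-Hölder function is continuous. -/
private lemma holder_continuous_aux {β C : ℝ} {Θ : R2 → ℝ} (hβ : 0 < β) (hC : 0 < C)
    (h : ∀ x y : R2, |Θ x - Θ y| ≤ C * ‖x - y‖ ^ β) : Continuous Θ := by
  rw [Metric.continuous_iff]
  intro x ε hε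
  refine ⟨(ε / C) ^ β⁻¹, Real.rpow_pos_of_pos (div_pos hε hC) _, fun a ha => ?_⟩
  have h1 : dist (Θ a) (Θ x) ≤ C * dist a x ^ β := by
    rw [Real.dist_eq, dist_eq_norm]; exact h a x
  have h2 : dist a x ^ β < ((ε / C) ^ β⁻¹) ^ β :=
    Real.rpow_lt_rpow dist_nonneg ha hβ
  rw [Real.rpow_inv_rpow (div_pos hε hC).le hβ.ne'] at h2
  calc dist (Θ a) (Θ x) ≤ C * dist a x ^ β := h1
    _ < C * (ε / C) := mul_lt_mul_of_pos_left h2 hC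
    _ = ε := by field_simp

/-- Level sets `{|Θ| ≥ c}` of a Hölder function with bounded `L^r` integrals on
balls are bounded. -/
private lemma bounded_level_set_aux {β C r c : ℝ} {Θ : R2 → ℝ}
    (hβ : 0 < β) (hC : 0 < C) (hr : 0 < r) (hc : 0 < c)
    (hHol : ∀ x y : R2, |Θ x - Θ y| ≤ C * ‖x - y‖ ^ β)
    (hcont : Continuous Θ)
    (hΘr : ∃ Cr L₀ : ℝ, ∀ L ≥ L₀, (∫ y in closedBall (0:R2) L, |Θ y| ^ r) ≤ Cr) :
    ∃ R : ℝ, ∀ y : R2, R ≤ ‖y‖ → |Θ y| < c := by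
  by_contra hcon
  push_neg at hcon
  obtain ⟨Cr, L₀, hCr⟩ := hΘr
  set δ : ℝ := (c / (2 * C)) ^ β⁻¹ with hδdef
  have hδ : 0 < δ := Real.rpow_pos_of_pos (by positivity) _
  have hδβ : δ ^ β = c / (2 * C) := Real.rpow_inv_rpow (by positivity) hβ.ne'
  have key : ∀ y : R2, c ≤ |Θ y| → ∀ z ∈ closedBall y δ, c / 2 ≤ |Θ z| := by
    intro y hy z hz
    have h1 : |Θ y| - |Θ z| ≤ |Θ y - Θ z| := abs_sub_abs_le_abs_sub _ _
    have h2 : |Θ y - Θ z| ≤ C * ‖y - z‖ ^ β := hHol y z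
    have h3 : ‖y - z‖ ^ β ≤ δ ^ β := by
      apply Real.rpow_le_rpow (norm_nonneg _) _ hβ.le
      rw [← dist_eq_norm, dist_comm]
      exact hz
    have h4 : C * ‖y - z‖ ^ β ≤ C * δ ^ β := mul_le_mul_of_nonneg_left h3 hC.le
    have h5 : C * δ ^ β = c / 2 := by rw [hδβ]; field_simp
    linarith
  set f : R2 → ℝ := fun z => |Θ z| ^ r with hfdef
  have hfc : Continuous f := by
    apply Continuous.rpow_const hcont.abs
    exact fun z => Or.inr hr.le
  have hf0 : ∀ z, 0 ≤ f z := fun z => Real.rpow_nonneg (abs_nonneg _) _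
  have hfint : ∀ (y : R2) (R : ℝ), IntegrableOn f (closedBall y R) := fun y R =>
    hfc.continuousOn.integrableOn_compact (isCompact_closedBall _ _)
  set v : ℝ := (c / 2) ^ r * (volume (closedBall (0:R2) δ)).toReal with hvdef
  have hv : 0 < v := by
    apply mul_pos (Real.rpow_pos_of_pos (by positivity) _)
    exact ENNReal.toReal_pos (measure_closedBall_pos volume _ hδ).ne'
      measure_closedBall_lt_top.ne
  have main : ∀ n : ℕ, ∃ L, max L₀ 0 ≤ L ∧
      (n : ℝ) * v ≤ ∫ z in closedBall (0:R2) L, f z := by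
    intro n
    induction n with
    | zero =>
      refine ⟨max L₀ 0, le_rfl, ?_⟩
      simpa using setIntegral_nonneg measurableSet_closedBall (fun z _ => hf0 z)
    | succ n ih =>
      obtain ⟨L, hL, hInt⟩ := ih
      obtain ⟨y, hy1, hy2⟩ := hcon (L + 3 * δ)
      have hLnn : 0 ≤ L := le_trans (le_max_right _ _) hL
      refine ⟨‖y‖ + δ, le_trans hL (by nlinarith [norm_nonneg y]), ?_⟩
      have hsb : v ≤ ∫ z in closedBall y δ, f z := by
        have h := setIntegral_ge_of_const_le (c := (c / 2) ^ r)
          (measurableSet_closedBall (x := y) (ε := δ))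
          measure_closedBall_lt_top.ne
          (fun z hz => Real.rpow_le_rpow (by positivity) (key y hy2 z hz) hr.le)
          (hfint y δ)
        rwa [measureReal_def, MeasureTheory.Measure.addHaar_closedBall_center volume y δ,
          smul_eq_mul, mul_comm] at h
      have hdisj : Disjoint (closedBall (0:R2) L) (closedBall y δ) := by
        rw [Set.disjoint_left]
        intro z hz1 hz2
        rw [mem_closedBall, dist_zero_right] at hz1
        rw [mem_closedBall] at hz2
        have h := norm_le_norm_add_norm_sub z y
        rw [← dist_eq_norm] at h
        linarith
      have hsub : closedBall (0:R2) L ∪ closedBall y δ ⊆ closedBall (0:R2) (‖y‖ + δ) := by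
        intro z hz
        rw [mem_closedBall, dist_zero_right]
        rcases hz with hz | hz
        · rw [mem_closedBall, dist_zero_right] at hz
          linarith
        · rw [mem_closedBall] at hz
          have h := norm_le_norm_add_norm_sub y z
          rw [← dist_eq_norm, dist_comm] at h
          linarith [h, hz]
      push_cast
      calc ((n : ℝ) + 1) * v = (n : ℝ) * v + v := by ring
        _ ≤ (∫ z in closedBall (0:R2) L, f z) + ∫ z in closedBall y δ, f z :=
            add_le_add hInt hsb
        _ = ∫ z in closedBall (0:R2) L ∪ closedBall y δ, f z :=
            (setIntegral_union hdisj measurableSet_closedBall (hfint 0 L) (hfint y δ)).symm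
        _ ≤ ∫ z in closedBall (0:R2) (‖y‖ + δ), f z := by
            apply setIntegral_mono_set (hfint 0 (‖y‖ + δ))
              (Filter.Eventually.of_forall (fun z => hf0 z))
            exact Filter.Eventually.of_forall (fun z hz => hsub hz)
  obtain ⟨n, hn⟩ := exists_nat_gt (Cr / v)
  obtain ⟨L, hL, hInt⟩ := main n
  have h1 : Cr < (n : ℝ) * v := by rwa [div_lt_iff₀ hv] at hn
  have h2 := hCr L (le_trans (le_max_left _ _) hL)
  linarith

/-- Core argument: at a global maximum of the profile with positive value, the
transport equation together with self-similarity yields a contradiction. -/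
private lemma aux_max (β α T ρ : ℝ) (x₀ : R2) (θ : R2 → ℝ → ℝ) (Θ : R2 → ℝ)
    (u : R2 → ℝ → R2)
    (hT : 0 < T) (hρ : 0 < ρ) (hA : 0 < 1 + α) (hE : 0 < 1 + α - β)
    (hss : ∀ t ∈ Ioo (0:ℝ) T, ∀ x ∈ ball x₀ ρ,
      θ x t = (T - t) ^ (-((1 + α - β) / (1 + α))) *
        Θ (((T - t) ^ (-(1 / (1 + α)))) • (x - x₀)))
    (hEq : ∀ t ∈ Ioo (0:ℝ) T, ∀ x : R2,
      HasDerivAt (fun τ => θ x τ) (-(⟪u x t, gradient (fun z => θ z t) x⟫)) t)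
    (y : R2) (hmax : ∀ z, Θ z ≤ Θ y) : Θ y ≤ 0 := by
  by_contra hm
  push_neg at hm
  set e₁ : ℝ := (1 + α - β) / (1 + α) with he₁def
  set e₂ : ℝ := 1 / (1 + α) with he₂def
  have he₁ : 0 < e₁ := div_pos hE hA
  have he₂ : 0 < e₂ := by rw [he₂def]; positivity
  set ε : ℝ := ρ / (‖y‖ + 1) with hεdef
  have hεpos : 0 < ε := by rw [hεdef]; positivity
  set s₀ : ℝ := min (T / 2) ((min ε 1) ^ e₂⁻¹ / 2) with hs₀def
  have hmin1 : 0 < min ε 1 := lt_min hεpos one_pos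
  have hs₀ : 0 < s₀ := lt_min (by linarith) (by positivity)
  have hs₀T : s₀ < T := lt_of_le_of_lt (min_le_left _ _) (by linarith)
  have hs₀e : s₀ ^ e₂ < ε := by
    have hpow : 0 < (min ε 1) ^ e₂⁻¹ := Real.rpow_pos_of_pos hmin1 _
    have h1 : s₀ < (min ε 1) ^ e₂⁻¹ :=
      lt_of_le_of_lt (min_le_right _ _) (by linarith)
    have h2 : s₀ ^ e₂ < ((min ε 1) ^ e₂⁻¹) ^ e₂ := Real.rpow_lt_rpow hs₀.le h1 he₂
    rw [Real.rpow_inv_rpow hmin1.le he₂.ne'] at h2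
    exact lt_of_lt_of_le h2 (min_le_left _ _)
  set t₀ : ℝ := T - s₀ with ht₀def
  have ht₀ : t₀ ∈ Ioo (0:ℝ) T := ⟨by simp only [ht₀def]; linarith, by simp only [ht₀def]; linarith⟩
  have hTt₀ : T - t₀ = s₀ := by rw [ht₀def]; ring
  set xs : R2 := x₀ + (s₀ ^ e₂) • y with hxsdef
  have hxsub : xs - x₀ = (s₀ ^ e₂) • y := by rw [hxsdef]; abel
  have hxball : xs ∈ ball x₀ ρ := by
    rw [mem_ball, dist_eq_norm, hxsub, norm_smul, Real.norm_eq_abs,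
      abs_of_pos (Real.rpow_pos_of_pos hs₀ _)]
    have h1 : s₀ ^ e₂ * ‖y‖ ≤ s₀ ^ e₂ * (‖y‖ + 1) := by
      apply mul_le_mul_of_nonneg_left (by linarith) (Real.rpow_pos_of_pos hs₀ _).le
    have h2 : s₀ ^ e₂ * (‖y‖ + 1) < ε * (‖y‖ + 1) := by
      apply mul_lt_mul_of_pos_right hs₀e (by positivity)
    have h3 : ε * (‖y‖ + 1) = ρ := by
      rw [hεdef]; field_simp
    linarith
  have harg : (s₀ ^ (-e₂)) • (xs - x₀) = y := by
    rw [hxsub, smul_smul, ← Real.rpow_add hs₀, neg_add_cancel, Real.rpow_zero, one_smul]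
  -- x* is a local max of θ(·, t₀)
  have h2 : IsLocalMax (fun z => θ z t₀) xs := by
    have hev : ∀ᶠ z in 𝓝 xs, z ∈ ball x₀ ρ := isOpen_ball.eventually_mem hxball
    filter_upwards [hev] with z hz
    have hz' := hss t₀ ht₀ z hz
    have hx' := hss t₀ ht₀ xs hxball
    simp only [hTt₀] at hz' hx'
    simp only [hz', hx', harg]
    exact mul_le_mul_of_nonneg_left (hmax _) (Real.rpow_nonneg hs₀.le _)
  have h3 : gradient (fun z => θ z t₀) xs = 0 := by
    have h := h2.fderiv_eq_zero
    unfold gradient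
    rw [h, map_zero]
  have h4 : HasDerivAt (fun τ => θ xs τ) 0 t₀ := by
    have h := hEq t₀ ht₀ xs
    rwa [h3, inner_zero_right, neg_zero] at h
  set g : ℝ → ℝ := fun τ => (T - τ) ^ (-e₁) * Θ (((T - τ) ^ (-e₂)) • (xs - x₀)) with hgdef
  have hgev : g =ᶠ[𝓝 t₀] fun τ => θ xs τ := by
    have hev : ∀ᶠ τ in 𝓝 t₀, τ ∈ Ioo (0:ℝ) T := isOpen_Ioo.eventually_mem ht₀
    filter_upwards [hev] with τ hτ
    exact (hss τ hτ xs hxball).symm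
  have h5 : HasDerivAt g 0 t₀ := h4.congr_of_eventuallyEq hgev
  have hsub : HasDerivAt (fun τ : ℝ => T - τ) (-1) t₀ := (hasDerivAt_id t₀).const_sub T
  have hTne : T - t₀ ≠ 0 := by rw [hTt₀]; exact hs₀.ne'
  have hψ : HasDerivAt (fun τ : ℝ => (T - τ) ^ e₁) (-1 * e₁ * s₀ ^ (e₁ - 1)) t₀ := by
    have h := hsub.rpow_const (p := e₁) (Or.inl hTne)
    rwa [hTt₀] at h
  set φ : ℝ → ℝ := fun τ => Θ (((T - τ) ^ (-e₂)) • (xs - x₀)) with hφdef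
  have hφev : φ =ᶠ[𝓝 t₀] fun τ => (T - τ) ^ e₁ * g τ := by
    have hev : ∀ᶠ τ in 𝓝 t₀, τ ∈ Iio T := isOpen_Iio.eventually_mem ht₀.2
    filter_upwards [hev] with τ hτ
    rw [hφdef, hgdef]
    simp only
    rw [← mul_assoc, ← Real.rpow_add (sub_pos.mpr hτ), add_neg_cancel,
      Real.rpow_zero, one_mul]
  have hφ : HasDerivAt φ (-1 * e₁ * s₀ ^ (e₁ - 1) * g t₀ + (T - t₀) ^ e₁ * 0) t₀ :=
    (hψ.mul h5).congr_of_eventuallyEq hφev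
  have hφt₀ : φ t₀ = Θ y := by
    rw [hφdef]; simp only [hTt₀, harg]
  have hφmax : IsLocalMax φ t₀ := by
    apply Filter.Eventually.of_forall
    intro τ
    rw [hφt₀]
    exact hmax _
  have hzero : -1 * e₁ * s₀ ^ (e₁ - 1) * g t₀ + (T - t₀) ^ e₁ * 0 = 0 := by
    have h := hφmax.deriv_eq_zero
    rwa [hφ.deriv] at h
  have hgt₀ : g t₀ = s₀ ^ (-e₁) * Θ y := by
    rw [hgdef]; simp only [hTt₀, harg]
  rw [hgt₀, mul_zero, add_zero] at hzero
  have hpos : 0 < e₁ * s₀ ^ (e₁ - 1) * (s₀ ^ (-e₁) * Θ y) := by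
    have := Real.rpow_pos_of_pos hs₀ (e₁ - 1)
    have := Real.rpow_pos_of_pos hs₀ (-e₁)
    positivity
  nlinarith [hzero, hpos]

/-- **Remark 2.5** (case `β ∈ (0,1]`, endpoint `α = β - 1 + 2/r` with `γ = 0`):
if the β-Hölder continuous profile satisfies `Θ ∈ L^r(ℝ²)` (its `L^r` integrals
over balls are bounded), then at the endpoint value `α = β - 1 + 2/r` the
profile vanishes identically. -/
theorem gsqg_locally_self_similar_beta_le_one_endpoint
    (β α T ρ s p r : ℝ) (x₀ : R2) (θ : R2 → ℝ → ℝ) (Θ : R2 → ℝ)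
    (hβ : β ∈ Ioc (0:ℝ) 1) (hα : -1 < α) (hT : 0 < T) (hρ : 0 < ρ) (hs : 1 + β < s)
    (hreg : RegularityClass s T θ) (hsol : IsGSQGSolution β T θ)
    (hss : LocallySelfSimilar β α T ρ x₀ θ Θ) (hΘHolder : HolderBeta β Θ)
    (hp : 1 ≤ p) (hr : p + 1 ≤ r)
    (hΘr : ∃ C L₀ : ℝ, ∀ L ≥ L₀, (∫ y in closedBall (0:R2) L, |Θ y| ^ r) ≤ C)
    (hαeq : α = β - 1 + 2 / r) :
    ∀ y, Θ y = 0 := by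
  intro y₀
  by_contra hy₀
  obtain ⟨C', hC'0, hHol₀⟩ := hΘHolder
  have hβ0 : 0 < β := hβ.1
  set C : ℝ := C' + 1 with hCdef
  have hC : 0 < C := by positivity
  have hHol : ∀ x y : R2, |Θ x - Θ y| ≤ C * ‖x - y‖ ^ β := by
    intro x y
    have h1 := hHol₀ x y
    have h2 : C' * ‖x - y‖ ^ β ≤ C * ‖x - y‖ ^ β := by
      apply mul_le_mul_of_nonneg_right (by linarith) (Real.rpow_nonneg (norm_nonneg _) _)
    linarith
  have hcont : Continuous Θ := holder_continuous_aux hβ0 hC hHol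
  have hr0 : 0 < r := by linarith
  set c : ℝ := |Θ y₀| with hcdef
  have hc : 0 < c := abs_pos.mpr hy₀
  obtain ⟨R, hR⟩ := bounded_level_set_aux hβ0 hC hr0 hc hHol hcont hΘr
  set R' : ℝ := max R ‖y₀‖ with hR'def
  have hmem : y₀ ∈ closedBall (0:R2) R' := by
    rw [mem_closedBall, dist_zero_right]
    exact le_max_right _ _
  obtain ⟨ys, hysmem, hysmax⟩ := (isCompact_closedBall (0:R2) R').exists_isMaxOn
    ⟨y₀, hmem⟩ (hcont.abs.continuousOn)
  have hglob : ∀ z, |Θ z| ≤ |Θ ys| := by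
    intro z
    by_cases hz : z ∈ closedBall (0:R2) R'
    · exact hysmax hz
    · rw [mem_closedBall, dist_zero_right, not_le] at hz
      have h1 : R ≤ ‖z‖ := le_trans (le_max_left _ _) hz.le
      have h2 := hR z h1
      have h3 : c ≤ |Θ ys| := hysmax hmem
      linarith
  have hysne : Θ ys ≠ 0 := by
    have := hglob y₀
    intro h
    rw [h, abs_zero] at this
    linarith
  obtain ⟨u, Cβ, _, hEq⟩ := hsol
  have hA : 0 < 1 + α := by linarith
  have hE : 0 < 1 + α - β := by
    have h1 : 1 + α - β = 2 / r := by rw [hαeq]; ring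
    rw [h1]; positivity
  rcases hysne.lt_or_gt with hneg | hpos
  · -- Θ ys < 0 : apply aux_max to -θ, -Θ
    have hss' : ∀ t ∈ Ioo (0:ℝ) T, ∀ x ∈ ball x₀ ρ,
        (fun x t => -θ x t) x t = (T - t) ^ (-((1 + α - β) / (1 + α))) *
          (fun z => -Θ z) (((T - t) ^ (-(1 / (1 + α)))) • (x - x₀)) := by
      intro t ht x hx
      simp only
      rw [hss t ht x hx]
      ring
    have hEq' : ∀ t ∈ Ioo (0:ℝ) T, ∀ x : R2,
        HasDerivAt (fun τ => -θ x τ)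
          (-(⟪u x t, gradient (fun z => -θ z t) x⟫)) t := by
      intro t ht x
      have hg : gradient (fun z => -θ z t) x = - gradient (fun z => θ z t) x := by
        unfold gradient
        rw [fderiv_fun_neg, map_neg]
      rw [hg, inner_neg_right, neg_neg]
      have h := (hEq t ht x).neg
      rw [neg_neg] at h
      exact h
    have h := aux_max β α T ρ x₀ (fun x t => -θ x t) (fun z => -Θ z) u
      hT hρ hA hE hss' hEq' ys (fun z => by
        simp only [neg_le_neg_iff]
        have h1 := hglob z
        have h2 : |Θ ys| = -Θ ys := abs_of_neg hneg
        have h3 : -|Θ z| ≤ Θ z := neg_abs_le _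
        linarith)
    linarith
  · -- Θ ys > 0 : apply aux_max directly
    have h := aux_max β α T ρ x₀ θ Θ u hT hρ hA hE hss hEq ys (fun z => by
      have h1 := hglob z
      have h2 : |Θ ys| = Θ ys := abs_of_pos hpos
      have h3 : Θ z ≤ |Θ z| := le_abs_self _
      linarith)
    linarith
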